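/- For every natural number n, the number of ternary trees with n nodes equals C(3n,n)/(2n+1). -/

import Mathlib

/-- A ternary tree: empty, or a root with left, middle and right subtrees. -/
inductive TernaryTree : Type
  | leaf : TernaryTree
  | node : TernaryTree → TernaryTree → TernaryTree → TernaryTree

/-- Number of nodes of a ternary tree. -/
def TernaryTree.size : TernaryTree → ℕ
  | .leaf => 0
  | .node l m r => 1 + l.size + m.size + r.size

/-- All nodes of `t` have nonnegative abscissa, when the root of `t` has abscissa `j`. -/
def TernaryTree.NonnegAbs : TernaryTree → ℤ → Prop
  | .leaf, _ => True
  | .node l m r, j =>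
      0 ≤ j ∧ l.NonnegAbs (j + 1) ∧ m.NonnegAbs j ∧ r.NonnegAbs (j - 1)

/-- A left ternary tree: nonempty with all abscissas nonnegative (root at abscissa 0). -/
def TernaryTree.IsLeft (t : TernaryTree) : Prop :=
  t ≠ .leaf ∧ t.NonnegAbs 0

/-- Number of nodes of odd abscissa, when the root has abscissa `j`. -/
def TernaryTree.oddCount : TernaryTree → ℤ → ℕ
  | .leaf, _ => 0
  | .node l m r, j =>
      (if Odd j then 1 else 0) + l.oddCount (j + 1) + m.oddCount j + r.oddCount (j - 1)

deriving instance DecidableEq for TernaryTree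

namespace TernaryTreeAux

open Finset Finset.Nat TernaryTree

open Finset.HasAntidiagonal.antidiagonal (fst_le snd_le)

/-- All trees formed from children in `a`, `b`, `c`. -/
abbrev tripleNode (a b c : Finset TernaryTree) : Finset TernaryTree :=
  (a ×ˢ b ×ˢ c).map
    ⟨fun x => .node x.1 x.2.1 x.2.2, fun ⟨x₁, x₂, x₃⟩ ⟨y₁, y₂, y₃⟩ h => by simpa using h⟩

/-- The finset of all ternary trees of size `n`. -/
def trees : ℕ → Finset TernaryTree
  | 0 => {.leaf}
  | n + 1 =>
    (antidiagonal n).attach.biUnion fun ij =>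
      (antidiagonal ij.1.2).attach.biUnion fun ab =>
        tripleNode (trees ij.1.1) (trees ab.1.1) (trees ab.1.2)
  decreasing_by
    · have := fst_le ij.2; omega
    · have h1 := snd_le ij.2; have := fst_le ab.2; omega
    · have h1 := snd_le ij.2; have := snd_le ab.2; omega

@[simp] theorem trees_zero : trees 0 = {.leaf} := by rw [trees]

theorem trees_succ (n : ℕ) :
    trees (n + 1) =
      (antidiagonal n).biUnion fun ij =>
        (antidiagonal ij.2).biUnion fun ab =>
          tripleNode (trees ij.1) (trees ab.1) (trees ab.2) := by
  rw [trees]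
  ext
  simp

theorem mem_tripleNode {a b c : Finset TernaryTree} {T : TernaryTree} :
    T ∈ tripleNode a b c ↔
      ∃ l m r : TernaryTree, T = .node l m r ∧ l ∈ a ∧ m ∈ b ∧ r ∈ c := by
  constructor
  · intro h
    rcases Finset.mem_map.1 h with ⟨⟨x, y, z⟩, hmem, rfl⟩
    rcases Finset.mem_product.1 hmem with ⟨hx, hyz⟩
    rcases Finset.mem_product.1 hyz with ⟨hy, hz⟩
    exact ⟨x, y, z, rfl, hx, hy, hz⟩
  · rintro ⟨l, m, r, rfl, hl, hm, hr⟩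
    exact Finset.mem_map.2
      ⟨⟨l, m, r⟩, Finset.mem_product.2 ⟨hl, Finset.mem_product.2 ⟨hm, hr⟩⟩, rfl⟩

@[simp]
theorem mem_trees {T : TernaryTree} {n : ℕ} : T ∈ trees n ↔ T.size = n := by
  induction T generalizing n with
  | leaf =>
    cases n with
    | zero => simp [TernaryTree.size]
    | succ n =>
      simp only [trees_succ, mem_biUnion, mem_tripleNode, TernaryTree.size]
      constructor
      · rintro ⟨ij, _, ab, _, l, m, r, h, -⟩
        exact absurd h (by simp)
      · omega
  | node l m r ihl ihm ihr =>
    cases n with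
    | zero =>
      constructor
      · intro h; rw [trees_zero, Finset.mem_singleton] at h; exact absurd h (by simp)
      · intro h; exact absurd h (by simp [TernaryTree.size])
    | succ n =>
      rw [trees_succ, Finset.mem_biUnion]
      constructor
      · rintro ⟨ij, hij, hT⟩
        rcases Finset.mem_biUnion.1 hT with ⟨ab, hab, hT⟩
        rcases mem_tripleNode.1 hT with ⟨x, y, z, heq, hx, hy, hz⟩
        simp only [TernaryTree.node.injEq] at heq
        obtain ⟨rfl, rfl, rfl⟩ := heq
        rw [ihl] at hx; rw [ihm] at hy; rw [ihr] at hz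
        rw [Finset.HasAntidiagonal.mem_antidiagonal] at hij hab
        simp only [TernaryTree.size]
        omega
      · intro h
        simp only [TernaryTree.size] at h
        refine ⟨(l.size, m.size + r.size), Finset.HasAntidiagonal.mem_antidiagonal.2 (by omega),
          Finset.mem_biUnion.2 ⟨(m.size, r.size), Finset.HasAntidiagonal.mem_antidiagonal.2 rfl,
            mem_tripleNode.2 ⟨l, m, r, rfl, ihl.2 rfl, ihm.2 rfl, ihr.2 rfl⟩⟩⟩

theorem mem_tripleNode_trees {T : TernaryTree} {i a b : ℕ} :
    T ∈ tripleNode (trees i) (trees a) (trees b) ↔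
      ∃ l m r : TernaryTree, T = .node l m r ∧ l.size = i ∧ m.size = a ∧ r.size = b := by
  simp only [mem_tripleNode, mem_trees]

/-- The number of ternary trees of size `n`. -/
def t (n : ℕ) : ℕ := (trees n).card

@[simp] theorem t_zero : t 0 = 1 := by simp [t]

theorem card_trees_succ (n : ℕ) :
    t (n + 1) = ∑ ij ∈ antidiagonal n, ∑ ab ∈ antidiagonal ij.2,
      t ij.1 * (t ab.1 * t ab.2) := by
  rw [t, trees_succ, card_biUnion]
  · refine sum_congr rfl fun ij _ => ?_
    rw [card_biUnion]
    · refine sum_congr rfl fun ab _ => ?_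
      rw [card_map, card_product, card_product]; simp only [t]
    · rintro ⟨a, b⟩ _ ⟨a', b'⟩ _ hne
      simp only [Function.onFun]; rw [Finset.disjoint_left]
      intro T h1 h2
      rw [mem_tripleNode_trees] at h1 h2
      obtain ⟨l, m, r, rfl, _, h1a, h1b⟩ := h1
      obtain ⟨l', m', r', heq, _, h2a, h2b⟩ := h2
      simp only [TernaryTree.node.injEq] at heq
      obtain ⟨rfl, rfl, rfl⟩ := heq
      exact hne (by rw [Prod.mk.injEq]; omega)
  · rintro ⟨i, j⟩ hij ⟨i', j'⟩ hij' hne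
    simp only [Function.onFun]; rw [Finset.disjoint_left]
    intro T h1 h2
    simp only [mem_biUnion, Prod.exists] at h1 h2
    obtain ⟨a, b, hab, h1⟩ := h1
    obtain ⟨a', b', hab', h2⟩ := h2
    rw [mem_tripleNode_trees] at h1 h2
    obtain ⟨l, m, r, rfl, h1i, h1a, h1b⟩ := h1
    obtain ⟨l', m', r', heq, h2i, h2a, h2b⟩ := h2
    simp only [TernaryTree.node.injEq] at heq
    obtain ⟨rfl, rfl, rfl⟩ := heq
    try simp only at h1i h1a h1b h2i h2a h2b
    rw [Finset.HasAntidiagonal.mem_antidiagonal] at hab hab'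
    exact hne (by rw [Prod.mk.injEq]; omega)

/-- Number of `p`-tuples of ternary trees with total size `n`. -/
def f : ℕ → ℕ → ℕ
  | 0, 0 => 1
  | 0, _ + 1 => 0
  | p + 1, n => ∑ ij ∈ antidiagonal n, t ij.1 * f p ij.2

@[simp] theorem f_zero_zero : f 0 0 = 1 := by rw [f]

@[simp] theorem f_zero_succ (n : ℕ) : f 0 (n + 1) = 0 := by rw [f]

theorem f_succ (p n : ℕ) : f (p + 1) n = ∑ ij ∈ antidiagonal n, t ij.1 * f p ij.2 := by rw [f]

@[simp] theorem f_base (p : ℕ) : f p 0 = 1 := by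
  induction p with
  | zero => simp
  | succ p ih => rw [f_succ]; simp [ih]

theorem f_one (n : ℕ) : f 1 n = t n := by
  cases n with
  | zero => simp
  | succ m =>
    rw [f_succ, Finset.Nat.sum_antidiagonal_succ']
    simp

theorem t_succ (n : ℕ) : t (n + 1) = f 3 n := by
  rw [card_trees_succ, f_succ]
  refine Finset.sum_congr rfl fun ij _ => ?_
  rw [f_succ, Finset.mul_sum]
  refine Finset.sum_congr rfl fun ab _ => ?_
  rw [f_one]

theorem fubini (F : ℕ → ℕ → ℕ → ℕ) (n : ℕ) :
    (∑ ij ∈ antidiagonal n, ∑ ab ∈ antidiagonal ij.1, F ab.1 ab.2 ij.2) =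
    ∑ ij ∈ antidiagonal n, ∑ ab ∈ antidiagonal ij.2, F ij.1 ab.1 ab.2 := by
  rw [Finset.sum_sigma', Finset.sum_sigma']
  refine Finset.sum_nbij'
    (fun x => ⟨(x.snd.1, x.snd.2 + x.fst.2), (x.snd.2, x.fst.2)⟩)
    (fun x => ⟨(x.fst.1 + x.snd.1, x.snd.2), (x.fst.1, x.snd.1)⟩)
    ?_ ?_ ?_ ?_ ?_
  · rintro ⟨⟨i, j⟩, ⟨a, b⟩⟩ h
    simp only [Finset.mem_sigma, Finset.HasAntidiagonal.mem_antidiagonal, and_true, true_and] at h ⊢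
    omega
  · rintro ⟨⟨a, m⟩, ⟨b, j⟩⟩ h
    simp only [Finset.mem_sigma, Finset.HasAntidiagonal.mem_antidiagonal, and_true, true_and] at h ⊢
    omega
  · rintro ⟨⟨i, j⟩, ⟨a, b⟩⟩ h
    simp only [Finset.mem_sigma, Finset.HasAntidiagonal.mem_antidiagonal] at h
    simp only [Sigma.mk.inj_iff, Prod.mk.injEq, heq_eq_eq, and_true, true_and,
      eq_self_iff_true]
    omega
  · rintro ⟨⟨a, m⟩, ⟨b, j⟩⟩ h
    simp only [Finset.mem_sigma, Finset.HasAntidiagonal.mem_antidiagonal] at h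
    simp only [Sigma.mk.inj_iff, Prod.mk.injEq, heq_eq_eq, and_true, true_and,
      eq_self_iff_true]
    omega
  · rintro ⟨⟨i, j⟩, ⟨a, b⟩⟩ _
    rfl

theorem f_conv (q p n : ℕ) :
    ∑ ij ∈ antidiagonal n, f q ij.1 * f p ij.2 = f (q + p) n := by
  induction q generalizing n with
  | zero =>
    cases n with
    | zero => simp
    | succ m =>
      rw [Finset.Nat.sum_antidiagonal_succ]
      simp
  | succ q ih =>
    have : ∀ ij ∈ antidiagonal n, f (q + 1) ij.1 * f p ij.2 =
        ∑ ab ∈ antidiagonal ij.1, t ab.1 * f q ab.2 * f p ij.2 := by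
      intro ij _
      rw [f_succ, Finset.sum_mul]
    rw [Finset.sum_congr rfl this, fubini (fun a b j => t a * f q b * f p j) n]
    rw [show q + 1 + p = (q + p) + 1 by omega, f_succ]
    refine Finset.sum_congr rfl fun ij _ => ?_
    rw [← ih ij.2, Finset.mul_sum]
    refine Finset.sum_congr rfl fun ab _ => ?_
    ring

theorem f_rec (p n : ℕ) : f (p + 1) (n + 1) = f p (n + 1) + f (p + 3) n := by
  rw [f_succ, Finset.Nat.sum_antidiagonal_succ, t_zero, one_mul]
  congr 1
  have : ∀ ij ∈ antidiagonal n, t (ij.1 + 1) * f p ij.2 = f 3 ij.1 * f p ij.2 := by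
    intro ij _; rw [t_succ]
  rw [Finset.sum_congr rfl this, f_conv 3 p n, add_comm 3 p]

/-- Closed form, in product shape avoiding subtraction and division. -/
theorem f_closed (n : ℕ) : ∀ p : ℕ,
    f p n * (n.factorial * (2 * n + p).factorial) * (3 * n + p) =
      p * (3 * n + p).factorial := by
  induction n with
  | zero =>
    intro p
    simp [Nat.mul_comm]
  | succ m ihn =>
    intro p
    induction p with
    | zero => simp
    | succ q ihq =>
      have h1 := ihq
      have h2 := ihn (q + 3)
      rw [f_rec q m]
      have e2 : (2 * (m + 1) + (q + 1)) = (2 * m + q + 2) + 1 := by omega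
      have e3 : (3 * (m + 1) + (q + 1)) = (3 * m + q + 3) + 1 := by omega
      have e2' : (2 * (m + 1) + q) = 2 * m + q + 2 := by omega
      have e3' : (3 * (m + 1) + q) = 3 * m + q + 3 := by omega
      have e2'' : (2 * m + (q + 3)) = (2 * m + q + 2) + 1 := by omega
      have e3'' : (3 * m + (q + 3)) = 3 * m + q + 3 := by omega
      rw [e2, e3, Nat.factorial_succ (2 * m + q + 2), Nat.factorial_succ (3 * m + q + 3)]
      rw [e2', e3'] at h1
      rw [e2'', e3'', Nat.factorial_succ (2 * m + q + 2)] at h2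
      rw [Nat.factorial_succ m] at *
      -- now pure (nonlinear) arithmetic from h1 and h2
      zify at h1 h2 ⊢
      refine mul_right_cancel₀ (b := (3 * (m : ℤ) + q + 3)) (by positivity) ?_
      linear_combination ((2 * (m : ℤ) + q + 3) * (3 * m + q + 4)) * h1 +
        (((m : ℤ) + 1) * (3 * m + q + 4)) * h2

theorem t_eq (n : ℕ) : t n * (2 * n + 1) = (3 * n).choose n := by
  have key := f_closed n 1
  rw [f_one] at key
  rw [Nat.factorial_succ (3 * n), one_mul] at key
  have h1 : t n * (n.factorial * (2 * n + 1).factorial) = (3 * n).factorial :=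
    Nat.eq_of_mul_eq_mul_right (by omega) (key.trans (mul_comm _ _))
  have h2 : t n * (2 * n + 1) * (n.factorial * (2 * n).factorial) = (3 * n).factorial := by
    rw [← h1, Nat.factorial_succ (2 * n)]
    ring
  have h3 : (3 * n).choose n * (n.factorial * (2 * n).factorial) = (3 * n).factorial := by
    have := Nat.choose_mul_factorial_mul_factorial (show n ≤ 3 * n by omega)
    rw [show 3 * n - n = 2 * n by omega] at this
    rw [← this]
    ring
  exact Nat.eq_of_mul_eq_mul_right (by positivity) (h2.trans h3.symm)

end TernaryTreeAux

theorem ternary_tree_count (n : ℕ) :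
    Nat.card {T : TernaryTree // T.size = n} = Nat.choose (3 * n) n / (2 * n + 1) := by
  have hcard : Nat.card {T : TernaryTree // T.size = n} = TernaryTreeAux.t n := by
    rw [TernaryTreeAux.t, ← Nat.card_eq_finsetCard]
    exact Nat.card_congr (Equiv.subtypeEquivRight fun T => TernaryTreeAux.mem_trees.symm)
  rw [hcard, ← TernaryTreeAux.t_eq n, Nat.mul_div_cancel _ (by omega)]
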